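/- Leave-one-out identity for sampled cross validation: let B ∈ ℝ^{n×n} be symmetric positive definite, G ∈ ℝ^{ℓ×n}, g ∈ ℝ^n, c ∈ ℝ^ℓ, and for j ∈ {1,…,ℓ} set a_j = Gᵀe_j, t_jj = e_jᵀ G B Gᵀ e_j, and assume t_jj ≠ 1. Define x = B(g + Gᵀc) and x_[j] = (B^{-1} − a_j a_jᵀ)^{-1}(g + Gᵀc − a_j e_jᵀ c). Then e_jᵀ c − e_jᵀ G x_[j] = (1/(1 − t_jj)) e_jᵀ(c − G x). -/

import Mathlib

open Matrix

lemma vecMulVec_mulVec' {n : ℕ} (a b u : Fin n → ℝ) :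
    (Matrix.vecMulVec a b).mulVec u = (b ⬝ᵥ u) • a := by
  funext i
  simp [Matrix.mulVec, Matrix.vecMulVec_apply, dotProduct, Finset.mul_sum, mul_comm,
    mul_left_comm]

/-- leave-one-out identity for sampled cross validation: with
`a_j = Gᵀe_j`, `t_jj = e_jᵀGBGᵀe_j ≠ 1`, `x = B(g + Gᵀc)` and
`x_[j] = (B⁻¹ − a_j a_jᵀ)⁻¹(g + Gᵀc − a_j e_jᵀc)`, one has
`e_jᵀc − e_jᵀG x_[j] = (1/(1 − t_jj)) e_jᵀ(c − Gx)`. -/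
theorem leave_one_out_residual_identity
    {n ℓ : ℕ} (B : Matrix (Fin n) (Fin n) ℝ) (hB : B.PosDef)
    (G : Matrix (Fin ℓ) (Fin n) ℝ) (g : Fin n → ℝ) (c : Fin ℓ → ℝ) (j : Fin ℓ)
    (a : Fin n → ℝ) (ha : a = Gᵀ.mulVec (Pi.single j 1))
    (t : ℝ) (ht : t = (G * B * Gᵀ) j j) (htne : t ≠ 1)
    (x : Fin n → ℝ) (hx : x = B.mulVec (g + Gᵀ.mulVec c))
    (xj : Fin n → ℝ)
    (hxj : xj = (B⁻¹ - Matrix.vecMulVec a a)⁻¹.mulVec (g + Gᵀ.mulVec c - c j • a)) :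
    c j - (G.mulVec xj) j = (1 / (1 - t)) * (c j - (G.mulVec x) j) := by
  have hdet : IsUnit B.det := isUnit_iff_ne_zero.mpr (ne_of_gt hB.det_pos)
  have ha' : a = G j := by
    funext i
    simp [ha, Matrix.mulVec, dotProduct, Pi.single_apply]
  -- key scalar: aᵀ B a = t
  have hta : a ⬝ᵥ B.mulVec a = t := by
    rw [ht, ha']
    simp only [Matrix.mul_apply, Matrix.mulVec, dotProduct, Matrix.transpose_apply,
      Finset.sum_mul, Finset.mul_sum]
    rw [Finset.sum_comm]
    exact Finset.sum_congr rfl fun i _ => Finset.sum_congr rfl fun k _ => by ring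
  set P : Matrix (Fin n) (Fin n) ℝ := Matrix.vecMulVec a a with hP
  set N : Matrix (Fin n) (Fin n) ℝ := B + (1 / (1 - t)) • (B * P * B) with hN
  have h1t : (1 : ℝ) - t ≠ 0 := sub_ne_zero.mpr (Ne.symm htne)
  -- P * B * P = t • P
  have hPBP : P * B * P = t • P := by
    ext i k
    simp only [hP, Matrix.mul_apply, Matrix.vecMulVec_apply, Matrix.smul_apply, smul_eq_mul]
    have : ∑ x1, (∑ x2, a i * a x2 * B x2 x1) * (a x1 * a k)
        = (a ⬝ᵥ B.mulVec a) * (a i * a k) := by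
      simp only [dotProduct, Matrix.mulVec, Finset.sum_mul, Finset.mul_sum]
      rw [Finset.sum_comm]
      exact Finset.sum_congr rfl fun p _ => Finset.sum_congr rfl fun q _ => by ring
    rw [this, hta]
  have hMN : (B⁻¹ - P) * N = 1 := by
    have hBiB : B⁻¹ * B = 1 := Matrix.nonsing_inv_mul B hdet
    have e1 : B⁻¹ * N = 1 + (1 / (1 - t)) • (P * B) := by
      simp only [hN, Matrix.mul_add, Matrix.mul_smul, hBiB]
      rw [Matrix.mul_assoc B P B, ← Matrix.mul_assoc B⁻¹ B (P * B), hBiB, Matrix.one_mul]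
    have e2 : P * N = P * B + (t / (1 - t)) • (P * B) := by
      rw [hN, Matrix.mul_add, Matrix.mul_smul]
      congr 1
      rw [show B * P * B = (B * P) * B from rfl, ← Matrix.mul_assoc, ← Matrix.mul_assoc,
        hPBP, Matrix.smul_mul, smul_smul]
      congr 1
      field_simp
    rw [Matrix.sub_mul, e1, e2]
    have hc : (1 : ℝ) / (1 - t) = 1 + t / (1 - t) := by field_simp; ring
    rw [hc, add_smul, one_smul]
    abel
  have hinv : (B⁻¹ - P)⁻¹ = N := Matrix.inv_eq_right_inv hMN
  set v : Fin n → ℝ := g + Gᵀ.mulVec c with hv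
  set w : Fin n → ℝ := v - c j • a with hw
  have hxj' : xj = N.mulVec w := by rw [hxj, hinv]
  -- a ⬝ᵥ N w
  have hNw : a ⬝ᵥ N.mulVec w
      = a ⬝ᵥ B.mulVec w + (1 / (1 - t)) * (t * (a ⬝ᵥ B.mulVec w)) := by
    rw [hN, Matrix.add_mulVec, dotProduct_add, Matrix.smul_mulVec, dotProduct_smul]
    congr 1
    rw [Matrix.mul_assoc, ← Matrix.mulVec_mulVec, ← Matrix.mulVec_mulVec,
      vecMulVec_mulVec' a a]
    rw [Matrix.mulVec_smul, dotProduct_smul]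
    simp [hta, mul_comm]
  have haBw : a ⬝ᵥ B.mulVec w = a ⬝ᵥ B.mulVec v - c j * t := by
    rw [hw, Matrix.mulVec_sub, dotProduct_sub, Matrix.mulVec_smul, dotProduct_smul,
      smul_eq_mul, hta]
  have hGx : (G.mulVec x) j = a ⬝ᵥ B.mulVec v := by
    rw [hx, ha']; rfl
  have hGxj : (G.mulVec xj) j = a ⬝ᵥ N.mulVec w := by
    rw [hxj', ha']; rfl
  rw [hGxj, hNw, haBw, hGx]
  field_simp
  ring
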